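/- If 𝒜 is a family of subsets of an n-element set such that |A| is odd for every A ∈ 𝒜 and |A_1 ∩ ... ∩ A_d| is even for every d pairwise distinct A_1,...,A_d ∈ 𝒜, then |𝒜| ≤ (d-1)·n. -/

import Mathlib

open Finset

namespace DWO

variable {n : ℕ}

def chv (A : Finset (Fin n)) : Fin n → ZMod 2 := fun x => if x ∈ A then 1 else 0

def inv (w : Fin n → ZMod 2) : Finset (Fin n) := Finset.univ.filter (fun x => w x = 1)

lemma inv_chv (A : Finset (Fin n)) : inv (chv A) = A := by
  ext x
  by_cases h : x ∈ A <;> simp [inv, chv, h]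

lemma chv_inj : Function.Injective (chv (n := n)) := by
  intro A B h
  rw [← inv_chv A, ← inv_chv B, h]

lemma card_cast (A : Finset (Fin n)) : (A.card : ZMod 2) = ∑ x, chv A x := by
  rw [Finset.card_eq_sum_ones]
  push_cast
  rw [show ∑ x, chv A x = ∑ x : Fin n, if x ∈ A then (1 : ZMod 2) else 0 from rfl,
    Finset.sum_ite_mem, Finset.univ_inter]

lemma card_inf_cast {m : ℕ} (B : Fin m → Finset (Fin n)) :
    ((Finset.univ.inf B).card : ZMod 2) = ∑ x, ∏ j, chv (B j) x := by
  rw [card_cast]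
  refine Finset.sum_congr rfl fun x _ => ?_
  by_cases h : x ∈ Finset.univ.inf B
  · have h' : ∀ j, x ∈ B j := by
      intro j; exact Finset.mem_inf.mp h j (Finset.mem_univ j)
    simp [chv, h, h']
  · rw [Finset.mem_inf] at h
    push_neg at h
    obtain ⟨j, -, hj⟩ := h
    have h0 : x ∉ Finset.univ.inf B := by
      rw [Finset.mem_inf]; push_neg; exact ⟨j, Finset.mem_univ j, hj⟩
    rw [Finset.prod_eq_zero (Finset.mem_univ j) (by simp [chv, hj])]
    simp [chv, h0]

lemma span_subset_sum {T : Finset (Fin n → ZMod 2)} {v : Fin n → ZMod 2}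
    (hv : v ∈ Submodule.span (ZMod 2) (T : Set (Fin n → ZMod 2))) :
    ∃ S ⊆ T, ∑ w ∈ S, w = v := by
  rw [Submodule.mem_span_finset] at hv
  obtain ⟨f, -, hf⟩ := hv
  refine ⟨T.filter (fun w => f w = 1), Finset.filter_subset _ _, ?_⟩
  rw [← hf, Finset.sum_filter]
  refine Finset.sum_congr rfl fun w _ => ?_
  have : f w = 0 ∨ f w = 1 := by
    have : ∀ a : ZMod 2, a = 0 ∨ a = 1 := by decide
    exact this (f w)
  rcases this with h | h <;> simp [h]

lemma exists_spanning (V : Finset (Fin n → ZMod 2)) :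
    ∃ T ⊆ V, T.card ≤ n ∧
      ∀ v ∈ V, v ∈ Submodule.span (ZMod 2) (T : Set (Fin n → ZMod 2)) := by
  obtain ⟨b, hbV, hspan, hli⟩ := exists_linearIndependent (ZMod 2) (V : Set (Fin n → ZMod 2))
  have hfin : b.Finite := V.finite_toSet.subset hbV
  refine ⟨hfin.toFinset, ?_, ?_, ?_⟩
  · intro w hw
    have := hfin.mem_toFinset.mp hw
    exact_mod_cast hbV this
  · haveI := hfin.fintype
    have hmk := hli.fintype_card_le_finrank
    rw [Module.finrank_fintype_fun_eq_card, Fintype.card_fin] at hmk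
    rw [hfin.card_toFinset]
    exact hmk
  · intro v hv
    rw [hfin.coe_toFinset, hspan]
    exact Submodule.subset_span hv

lemma greedy (e : ℕ) : ∀ V : Finset (Fin n → ZMod 2), e * n < V.card →
    ∃ v ∈ V, ∃ S : Fin e → Finset (Fin n → ZMod 2),
      (∀ j, S j ⊆ V.erase v) ∧
      (∀ j k, j ≠ k → Disjoint (S j) (S k)) ∧
      (∀ j, ∑ w ∈ S j, w = v) := by
  induction e with
  | zero =>
    intro V hV
    have hpos : 0 < V.card := by simpa using hV
    obtain ⟨v, hv⟩ := Finset.card_pos.mp hpos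
    exact ⟨v, hv, fun j => j.elim0, fun j => j.elim0, fun j k h => j.elim0, fun j => j.elim0⟩
  | succ e ih =>
    intro V hV
    obtain ⟨T, hTV, hTcard, hTspan⟩ := exists_spanning V
    have hcard : e * n < (V \ T).card := by
      have h2 : (V \ T).card = V.card - T.card := Finset.card_sdiff_of_subset hTV
      have h3 : T.card ≤ V.card := Finset.card_le_card hTV
      have h4 : (e + 1) * n = e * n + n := by ring
      omega
    obtain ⟨v, hvV', S', hS'sub, hS'disj, hS'sum⟩ := ih (V \ T) hcard
    have hvV : v ∈ V := (Finset.mem_sdiff.mp hvV').1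
    have hvT : v ∉ T := (Finset.mem_sdiff.mp hvV').2
    obtain ⟨S0, hS0T, hS0sum⟩ := span_subset_sum (hTspan v hvV)
    refine ⟨v, hvV, Fin.cons S0 S', ?_, ?_, ?_⟩
    · intro j
      refine Fin.cases ?_ ?_ j
      · simp only [Fin.cons_zero]
        intro w hw
        exact Finset.mem_erase.mpr ⟨fun h => hvT (h ▸ hS0T hw), hTV (hS0T hw)⟩
      · intro k
        simp only [Fin.cons_succ]
        intro w hw
        have h1 := Finset.mem_erase.mp (hS'sub k hw)
        exact Finset.mem_erase.mpr ⟨h1.1, (Finset.mem_sdiff.mp h1.2).1⟩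
    · have hd0 : ∀ k, Disjoint S0 (S' k) := by
        intro k
        rw [Finset.disjoint_left]
        intro a haS0 haS'
        have h1 := Finset.mem_erase.mp (hS'sub k haS')
        exact (Finset.mem_sdiff.mp h1.2).2 (hS0T haS0)
      intro j k
      refine Fin.cases ?_ ?_ j <;> [skip; intro j'] <;> refine Fin.cases ?_ ?_ k
      · intro h; exact absurd rfl h
      · intro k' _
        simp only [Fin.cons_zero, Fin.cons_succ]
        exact hd0 k'
      · intro _
        simp only [Fin.cons_zero, Fin.cons_succ]
        exact (hd0 j').symm
      · intro k' h
        simp only [Fin.cons_succ]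
        exact hS'disj j' k' (fun hh => h (congrArg Fin.succ hh))
    · intro j
      refine Fin.cases ?_ ?_ j
      · simpa using hS0sum
      · intro k; simpa using hS'sum k

lemma odd_cast {m : ℕ} (h : Odd m) : (m : ZMod 2) = 1 := by
  obtain ⟨k, rfl⟩ := h
  push_cast
  rw [show (2 : ZMod 2) = 0 by decide]
  ring

lemma even_cast {m : ℕ} (h : Even m) : (m : ZMod 2) = 0 := by
  obtain ⟨k, rfl⟩ := h
  push_cast
  rw [← two_mul, show (2 : ZMod 2) = 0 by decide]
  ring

end DWO

open DWO in
/-- Vu's `d`-wise Oddtown theorem: if every member of `𝒜 ⊆ 2^[n]` has odd size while the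
intersection of any `d` pairwise distinct members is even, then `|𝒜| ≤ (d-1)·n`. -/
theorem d_wise_oddtown {n d : ℕ} (hd : 2 ≤ d)
    (𝒜 : Finset (Finset (Fin n)))
    (hodd : ∀ A ∈ 𝒜, Odd A.card)
    (heven : ∀ B : Fin d → Finset (Fin n),
      (∀ i, B i ∈ 𝒜) → Function.Injective B →
      Even (Finset.univ.inf B).card) :
    𝒜.card ≤ (d - 1) * n := by
  by_contra hcon
  push_neg at hcon
  obtain ⟨e, rfl⟩ : ∃ e, d = e + 1 := ⟨d - 1, by omega⟩
  have he : 1 ≤ e := by omega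
  set V := 𝒜.image chv with hVdef
  have hVcard : V.card = 𝒜.card := Finset.card_image_of_injective _ chv_inj
  have h1 : e * n < V.card := by
    rw [hVcard]
    simpa using hcon
  obtain ⟨v, hvV, S, hSsub, hSdisj, hSsum⟩ := greedy e V h1
  obtain ⟨A, hA𝒜, hAv⟩ := Finset.mem_image.mp hvV
  -- facts about elements of S j
  have hmem : ∀ j, ∀ w ∈ S j, inv w ∈ 𝒜 ∧ chv (inv w) = w ∧ w ≠ v := by
    intro j w hw
    have h1 := Finset.mem_erase.mp (hSsub j hw)
    obtain ⟨C, hC𝒜, hCw⟩ := Finset.mem_image.mp h1.2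
    exact ⟨by rw [← hCw, inv_chv]; exact hC𝒜, by rw [← hCw, inv_chv], h1.1⟩
  have key : (1 : ZMod 2) = 0 := by
    have step1 : (1 : ZMod 2) = ∑ x, chv A x * ∏ j : Fin e, chv A x := by
      have : ∀ x, chv A x * ∏ j : Fin e, chv A x = chv A x := by
        intro x
        by_cases h : x ∈ A <;>
          simp [chv, h, zero_pow (show e ≠ 0 by omega)]
      rw [Finset.sum_congr rfl fun x _ => this x, ← card_cast, odd_cast (hodd A hA𝒜)]
    have step2 : ∀ x, chv A x * ∏ j : Fin e, chv A x
        = ∑ g ∈ Fintype.piFinset S, chv A x * ∏ j : Fin e, g j x := by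
      intro x
      rw [show ∏ j : Fin e, chv A x = ∏ j : Fin e, ∑ w ∈ S j, w x by
          refine Finset.prod_congr rfl fun j _ => ?_
          rw [hAv, ← hSsum j]
          simp [Finset.sum_apply],
        Finset.prod_univ_sum, Finset.mul_sum]
    have step3 : ∀ g ∈ Fintype.piFinset S,
        ∑ x, chv A x * ∏ j : Fin e, g j x = 0 := by
      intro g hg
      have hg' : ∀ j, g j ∈ S j := fun j => (Fintype.mem_piFinset.mp hg) j
      set B : Fin (e + 1) → Finset (Fin n) := Fin.cons A (fun j => inv (g j)) with hB
      have hchvB : ∀ i, chv (B i) = (Fin.cons v g : Fin (e + 1) → Fin n → ZMod 2) i := by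
        intro i
        refine Fin.cases ?_ ?_ i
        · simp [hB, hAv]
        · intro j
          simp [hB, (hmem j (g j) (hg' j)).2.1]
      have hBmem : ∀ i, B i ∈ 𝒜 := by
        intro i
        refine Fin.cases ?_ ?_ i
        · simpa [hB] using hA𝒜
        · intro j
          simpa [hB] using (hmem j (g j) (hg' j)).1
      have hBinj : Function.Injective B := by
        have hcg : Function.Injective (Fin.cons v g : Fin (e+1) → Fin n → ZMod 2) := by
          intro i i'
          refine Fin.cases ?_ ?_ i <;> [skip; intro j] <;> refine Fin.cases ?_ ?_ i'
          · intro _; rfl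
          · intro k hh
            simp only [Fin.cons_zero, Fin.cons_succ] at hh
            exact absurd hh.symm (hmem k (g k) (hg' k)).2.2
          · intro hh
            simp only [Fin.cons_zero, Fin.cons_succ] at hh
            exact absurd hh (hmem j (g j) (hg' j)).2.2
          · intro k hh
            simp only [Fin.cons_succ] at hh
            by_contra hne
            have hjk : j ≠ k := fun h' => hne (by rw [h'])
            have := Finset.disjoint_left.mp (hSdisj j k hjk) (hg' j)
            rw [hh] at this
            exact this (hg' k)
        intro i i' h
        apply hcg
        rw [← hchvB i, ← hchvB i', h]
      have := heven B hBmem hBinj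
      have hc := even_cast this
      rw [card_inf_cast] at hc
      rw [← hc]
      refine Finset.sum_congr rfl fun x _ => ?_
      rw [Fin.prod_univ_succ, hchvB 0]
      simp only [Fin.cons_zero]
      rw [hAv]
      congr 1
      refine Finset.prod_congr rfl fun j _ => ?_
      rw [hchvB j.succ, Fin.cons_succ]
    calc (1 : ZMod 2) = ∑ x, chv A x * ∏ j : Fin e, chv A x := step1
      _ = ∑ x, ∑ g ∈ Fintype.piFinset S, chv A x * ∏ j : Fin e, g j x :=
          Finset.sum_congr rfl fun x _ => step2 x
      _ = ∑ g ∈ Fintype.piFinset S, ∑ x, chv A x * ∏ j : Fin e, g j x :=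
          Finset.sum_comm
      _ = 0 := Finset.sum_eq_zero step3
  exact one_ne_zero key
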